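/- arXiv:2005.04066 — 2 statements merged into one kernel-verified Lean document; each statement's English description precedes it below -/
import Mathlib

section
/- Let b_0 < b_1 < b_2 < ⋯ enumerate in increasing order the positive integers whose odd part is congruent to 3 modulo 4. Then b_n - s_{b_n} = 2n + 1 for all n ≥ 0, where s_m = 1 + Σ_{k=0}^{m} j_k with j_0 = 0 and j_k = (-1/k) for k ≥ 1. -/
/-- The odd part of `n`: `n` divided by the largest power of `2` dividing `n`. -/
def oddPart (n : ℕ) : ℕ := n / 2 ^ (n.factorization 2)

/-- The Jacobi sequence: `j 0 = 0` and `j n = (-1/n)` (Jacobi symbol) for `n ≥ 1`. -/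
def jac (n : ℕ) : ℤ := if n = 0 then 0 else jacobiSym (-1) n

/-- `s n = 1 + Σ_{k=0}^n j k`. -/
def s (n : ℕ) : ℤ := 1 + ∑ k ∈ Finset.range (n + 1), jac k

lemma jac_two : jacobiSym (-1) 2 = 1 := by
  rw [← @jacobiSym.legendreSym.to_jacobiSym 2 ⟨Nat.prime_two⟩, legendreSym,
    quadraticChar_eq_one_of_char_two (ZMod.ringChar_zmod_n 2) (by decide)]

lemma oddPart_odd {n : ℕ} (hn : n ≠ 0) : Odd (oddPart n) := by
  have := Nat.not_dvd_ordCompl Nat.prime_two hn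
  rw [Nat.two_dvd_ne_zero] at this
  exact Nat.odd_iff.mpr this

lemma jac_eq_of_pos {k : ℕ} (hk : k ≠ 0) :
    jac k = if oddPart k % 4 = 3 then -1 else 1 := by
  have hfac : 2 ^ (k.factorization 2) * oddPart k = k := Nat.ordProj_mul_ordCompl_eq_self k 2
  have ho : Odd (oddPart k) := oddPart_odd hk
  have hone : oddPart k ≠ 0 := by
    rintro h; rw [h] at ho; simp [Nat.odd_iff] at ho
  have h2 : (2:ℕ) ^ (k.factorization 2) ≠ 0 := by positivity
  have : jacobiSym (-1) k
      = jacobiSym (-1) (2 ^ (k.factorization 2)) * jacobiSym (-1) (oddPart k) := by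
    rw [← jacobiSym.mul_right' (-1) h2 hone, hfac]
  rw [jac, if_neg hk, this, jacobiSym.pow_right, jac_two, one_pow, one_mul,
    jacobiSym.at_neg_one ho, ZMod.χ₄_nat_eq_if_mod_four]
  rw [if_neg (by simpa [Nat.odd_iff] using ho)]
  rcases Nat.odd_mod_four_iff.mp (Nat.odd_iff.mp ho) with h | h
  · simp [h]
  · simp [h]

lemma jac_eq' (k : ℕ) :
    jac k = (if k = 0 then 0 else 1)
      - 2 * (if 0 < k ∧ oddPart k % 4 = 3 then 1 else 0) := by
  rcases eq_or_ne k 0 with rfl | hk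
  · simp [jac]
  · rw [jac_eq_of_pos hk, if_neg hk]
    by_cases h : oddPart k % 4 = 3
    · rw [if_pos h, if_pos ⟨Nat.pos_of_ne_zero hk, h⟩]; ring
    · rw [if_neg h, if_neg (by tauto)]; ring

lemma s_eq (m : ℕ) :
    s m = 1 + m - 2 * ((Finset.range (m + 1)).filter
      (fun k => 0 < k ∧ oddPart k % 4 = 3)).card := by
  rw [s]
  have h1 : ∑ k ∈ Finset.range (m + 1), jac k
      = ∑ k ∈ Finset.range (m + 1), ((if k = 0 then 0 else 1)
        - 2 * (if 0 < k ∧ oddPart k % 4 = 3 then (1:ℤ) else 0)) := by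
    exact Finset.sum_congr rfl fun k _ => jac_eq' k
  rw [h1, Finset.sum_sub_distrib, ← Finset.mul_sum]
  have h2 : ∑ k ∈ Finset.range (m + 1), (if k = 0 then (0:ℤ) else 1) = m := by
    clear h1
    induction m with
    | zero => simp
    | succ n ih => rw [Finset.sum_range_succ, ih, if_neg n.succ_ne_zero]; push_cast; ring
  rw [h2, Finset.sum_boole]
  ring

theorem b_sub_s_b (b : ℕ → ℕ) (hb : StrictMono b)
    (hrange : ∀ m : ℕ, (0 < m ∧ oddPart m % 4 = 3) ↔ ∃ n, b n = m) :
    ∀ n : ℕ, (b n : ℤ) - s (b n) = 2 * n + 1 := by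
  intro n
  have hcard : ((Finset.range (b n + 1)).filter
      (fun k => 0 < k ∧ oddPart k % 4 = 3)).card = n + 1 := by
    have himg : (Finset.range (b n + 1)).filter (fun k => 0 < k ∧ oddPart k % 4 = 3)
        = (Finset.range (n + 1)).image b := by
      ext m
      simp only [Finset.mem_filter, Finset.mem_range, Finset.mem_image, Nat.lt_succ_iff]
      constructor
      · rintro ⟨hle, hP⟩
        obtain ⟨i, hi⟩ := (hrange m).mp hP
        exact ⟨i, by rw [← hi] at hle; exact hb.le_iff_le.mp hle, hi⟩
      · rintro ⟨i, hi, rfl⟩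
        exact ⟨hb.le_iff_le.mpr hi, (hrange (b i)).mpr ⟨i, rfl⟩⟩
    rw [himg, Finset.card_image_of_injective _ hb.injective, Finset.card_range]
  rw [s_eq, hcard]
  push_cast
  ring
end

section
/- For n ≥ 1, the digit m ≥ 2 occurs at position n in the sequence s (i.e., s_n = m) if and only if the binary representation of n has exactly m - 1 runs. -/
open Classical

/-- The number of runs (maximal blocks of equal digits) in the binary
representation of `n`, with `runs 0 = 0`. -/
noncomputable def binRuns (n : ℕ) : ℕ :=
  if n = 0 then 0
  else 1 + ((Finset.range (Nat.log2 n)).filter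
    (fun i => n.testBit i ≠ n.testBit (i + 1))).card

/-- Partial sums of `jac`. -/
def T (n : ℕ) : ℤ := ∑ k ∈ Finset.range (n + 1), jac k

lemma jac_two_mul (m : ℕ) (hm : m ≠ 0) : jac (2 * m) = jac m := by
  haveI : NeZero m := ⟨hm⟩
  unfold jac
  rw [if_neg (by omega), if_neg hm, jacobiSym.mul_right,
    show jacobiSym (-1) 2 = 1 by rw [← jacobiSym.legendreSym.to_jacobiSym]; decide, one_mul]

lemma jac_odd (m : ℕ) : jac (2 * m + 1) = (-1) ^ m := by
  unfold jac
  rw [if_neg (by omega), jacobiSym.at_neg_one ⟨m, by ring⟩,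
    ZMod.χ₄_eq_neg_one_pow (by omega)]
  congr 1
  omega

lemma T_succ (n : ℕ) : T (n + 1) = T n + jac (n + 1) :=
  Finset.sum_range_succ _ _

lemma T_even : ∀ m : ℕ, T (2 * m) = T m + ((m % 2 : ℕ) : ℤ) := by
  intro m
  induction m with
  | zero => simp
  | succ m ih =>
    have h1 : 2 * (m + 1) = (2 * m + 1) + 1 := by ring
    rw [h1, T_succ, show (2 * m + 1 : ℕ) = (2 * m) + 1 from rfl, T_succ,
      show (2 * m + 1) + 1 = 2 * (m + 1) from by ring, jac_two_mul (m + 1) (by omega),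
      show (2 * m) + 1 = 2 * m + 1 from rfl, jac_odd, ih, T_succ]
    rcases Nat.even_or_odd m with he | ho
    · have h2 : m % 2 = 0 := Nat.even_iff.mp he
      have h3 : (m + 1) % 2 = 1 := by omega
      rw [he.neg_one_pow, h2, h3]
      push_cast
      ring
    · have h2 : m % 2 = 1 := Nat.odd_iff.mp ho
      have h3 : (m + 1) % 2 = 0 := by omega
      rw [ho.neg_one_pow, h2, h3]
      push_cast
      ring

lemma T_odd (m : ℕ) : T (2 * m + 1) = T m + ((1 - m % 2 : ℕ) : ℤ) := by
  rw [show (2 * m + 1 : ℕ) = (2 * m) + 1 from rfl, T_succ, T_even,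
    show (2 * m) + 1 = 2 * m + 1 from rfl, jac_odd]
  rcases Nat.even_or_odd m with he | ho
  · have h2 : m % 2 = 0 := Nat.even_iff.mp he
    rw [he.neg_one_pow, h2]
    push_cast
    ring
  · have h2 : m % 2 = 1 := Nat.odd_iff.mp ho
    rw [ho.neg_one_pow, h2]
    push_cast
    ring

lemma log2_rec (n : ℕ) (hn : 2 ≤ n) : n.log2 = (n / 2).log2 + 1 := by
  rw [Nat.log2_def, if_pos hn]

lemma testBit_bit (m b i : ℕ) (hb : b < 2) : (2 * m + b).testBit (i + 1) = m.testBit i := by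
  rw [Nat.testBit_succ]
  congr 1
  omega

lemma binRuns_bit (m b : ℕ) (hm : m ≠ 0) (hb : b < 2) :
    binRuns (2 * m + b) = binRuns m +
      (if (2 * m + b).testBit 0 ≠ m.testBit 0 then 1 else 0) := by
  have hlog : (2 * m + b).log2 = m.log2 + 1 := by
    rw [log2_rec (2 * m + b) (by omega)]
    congr 2
    omega
  unfold binRuns
  rw [if_neg (by omega), if_neg hm, hlog, Finset.card_filter, Finset.card_filter,
    Finset.sum_range_succ']
  have hb1 : ∀ i, (2 * m + b).testBit (i + 1) = m.testBit i := fun i => testBit_bit m b i hb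
  simp only [hb1]
  omega

lemma jac_one : jac 1 = 1 := by
  unfold jac
  norm_num

lemma binRuns_two_mul (m : ℕ) (hm : m ≠ 0) : binRuns (2 * m) = binRuns m + m % 2 := by
  have h := binRuns_bit m 0 hm (by omega)
  rw [show 2 * m + 0 = 2 * m from by ring] at h
  rw [h]
  have ht0 : (2 * m).testBit 0 = false := by simp [Nat.testBit_zero]; try omega
  rcases Nat.even_or_odd m with he | ho
  · have h2 : m % 2 = 0 := Nat.even_iff.mp he
    have hb : m.testBit 0 = false := by simp [Nat.testBit_zero]; try omega
    simp [ht0, hb, h2]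
  · have h2 : m % 2 = 1 := Nat.odd_iff.mp ho
    have hb : m.testBit 0 = true := by simp [Nat.testBit_zero]; try omega
    simp [ht0, hb, h2]

lemma binRuns_two_mul_add_one (m : ℕ) (hm : m ≠ 0) :
    binRuns (2 * m + 1) = binRuns m + (1 - m % 2) := by
  have h := binRuns_bit m 1 hm (by omega)
  rw [h]
  have ht0 : (2 * m + 1).testBit 0 = true := by simp [Nat.testBit_zero]; try omega
  rcases Nat.even_or_odd m with he | ho
  · have h2 : m % 2 = 0 := Nat.even_iff.mp he
    have hb : m.testBit 0 = false := by simp [Nat.testBit_zero]; try omega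
    simp [ht0, hb, h2]
  · have h2 : m % 2 = 1 := Nat.odd_iff.mp ho
    have hb : m.testBit 0 = true := by simp [Nat.testBit_zero]; try omega
    simp [ht0, hb, h2]

lemma T_eq_runs : ∀ n : ℕ, T n = (binRuns n : ℤ) := by
  intro n
  induction n using Nat.strong_induction_on with
  | _ n ih =>
    rcases Nat.eq_zero_or_pos n with h0 | hpos
    · subst h0
      simp [T, jac, binRuns]
    rcases Nat.even_or_odd n with ⟨m, hm⟩ | ⟨m, hm⟩
    · have hn : n = 2 * m := by omega
      have hm0 : m ≠ 0 := by omega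
      subst hn
      rw [T_even, ih m (by omega), binRuns_two_mul m hm0]
      omega
    · have hn : n = 2 * m + 1 := by omega
      subst hn
      rcases Nat.eq_zero_or_pos m with hm0 | hm1
      · subst hm0
        norm_num [T, Finset.sum_range_succ, jac_one]
        · simp [binRuns, Nat.log2_def, jac]
      · have hm0 : m ≠ 0 := by omega
        rw [T_odd, ih m (by omega), binRuns_two_mul_add_one m hm0]
        omega

theorem s_eq_iff_runs (n m : ℕ) (hn : 1 ≤ n) (hm : 2 ≤ m) :
    s n = (m : ℤ) ↔ binRuns n = m - 1 := by
  have hs : s n = 1 + (binRuns n : ℤ) := by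
    rw [show s n = 1 + T n from rfl, T_eq_runs]
  rw [hs]
  omega
end
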